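/- Let p be a prime and G a finite abelian group whose order is coprime to p. Then the group ring ℤ_p[G] is isomorphic, as a ring, to a finite product of complete discrete valuation rings in each of which p generates the maximal ideal (i.e. each factor is an unramified finite extension of ℤ_p, with finite residue field of characteristic p). -/

import Mathlib

/-- A complete discrete valuation ring in which the prime number `p` generates the maximal ideal
(i.e. an unramified finite extension of `ℤ_p`), with finite residue field of characteristic
`p`. -/
structure UnramifiedCompleteDVR (p : ℕ) : Type 1 where
  carrier : Type
  [commRing : CommRing carrier]
  [isDomain : IsDomain carrier]
  [dvr : IsDiscreteValuationRing carrier]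
  complete : IsAdicComplete (IsLocalRing.maximalIdeal carrier) carrier
  p_gen : IsLocalRing.maximalIdeal carrier = Ideal.span {(p : carrier)}
  finiteResidue : Finite (IsLocalRing.ResidueField carrier)
  charResidue : CharP (IsLocalRing.ResidueField carrier) p

attribute [instance] UnramifiedCompleteDVR.commRing UnramifiedCompleteDVR.isDomain
  UnramifiedCompleteDVR.dvr

/-! ### Auxiliary: elementwise adic completeness data -/

/-- Elementwise formulation of `π`-adic separatedness and completeness. -/
structure PAdicData {A : Type*} [CommRing A] (π : A) : Prop where
  haus : ∀ x : A, (∀ n : ℕ, π ^ n ∣ x) → x = 0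
  compl : ∀ f : ℕ → A, (∀ m n : ℕ, m ≤ n → π ^ m ∣ f n - f m) →
    ∃ L : A, ∀ n : ℕ, π ^ n ∣ L - f n

namespace PAdicData

variable {A B : Type*} [CommRing A] [CommRing B] {π : A}

/-- Idempotents divisible by `π` vanish. -/
theorem eq_zero_of_idem_dvd (h : PAdicData π) {e : A} (he : IsIdempotentElem e)
    (hd : π ∣ e) : e = 0 := by
  refine h.haus e fun n => ?_
  have h1 : π ^ (n + 1) ∣ e ^ (n + 1) := pow_dvd_pow_of_dvd hd _
  rw [he.pow_succ_eq] at h1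
  exact dvd_trans (pow_dvd_pow π (Nat.le_succ n)) h1

/-- Newton iteration: lift idempotents along `π`. -/
theorem lift_idem (h : PAdicData π) (x : A) (hx : π ∣ x ^ 2 - x) :
    ∃ e : A, IsIdempotentElem e ∧ π ∣ e - x := by
  set f : ℕ → A := fun n => Nat.rec x (fun _ a => 3 * a ^ 2 - 2 * a ^ 3) n with hf
  have hstep : ∀ n, f (n + 1) = 3 * (f n) ^ 2 - 2 * (f n) ^ 3 := fun n => rfl
  have key1 : ∀ n, π ^ (n + 1) ∣ f n ^ 2 - f n := by
    intro n
    induction n with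
    | zero => rw [zero_add, pow_one]; exact hx
    | succ n ih =>
      have hiden : f (n + 1) ^ 2 - f (n + 1)
          = (f n ^ 2 - f n) ^ 2 * (4 * (f n ^ 2 - f n) - 3) := by
        rw [hstep]; ring
      rw [hiden]
      have : π ^ (n + 2) ∣ (f n ^ 2 - f n) ^ 2 := by
        have : π ^ ((n + 1) * 2) ∣ (f n ^ 2 - f n) ^ 2 := by
          rw [pow_mul]; exact pow_dvd_pow_of_dvd ih 2
        exact dvd_trans (pow_dvd_pow π (by omega)) this
      exact this.mul_right _
  have key2 : ∀ n, π ^ (n + 1) ∣ f (n + 1) - f n := by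
    intro n
    have : f (n + 1) - f n = -(2 * f n - 1) * (f n ^ 2 - f n) := by rw [hstep]; ring
    rw [this]
    exact (key1 n).mul_left _
  have compat : ∀ m n, m ≤ n → π ^ m ∣ f n - f m := by
    intro m n hmn
    induction n, hmn using Nat.le_induction with
    | base => simp
    | succ n hmn ih =>
      have : f (n + 1) - f m = (f (n + 1) - f n) + (f n - f m) := by ring
      rw [this]
      exact dvd_add (dvd_trans (pow_dvd_pow π (by omega)) (key2 n)) ih
  obtain ⟨L, hL⟩ := h.compl f compat
  have hidem : IsIdempotentElem L := by
    have : ∀ n, π ^ n ∣ L ^ 2 - L := by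
      intro n
      have hd : L ^ 2 - L = (L - f n) * (L + f n - 1) + (f n ^ 2 - f n) := by ring
      rw [hd]
      exact dvd_add ((hL n).mul_right _)
        (dvd_trans (pow_dvd_pow π (Nat.le_succ n)) (key1 n))
    have h0 : L ^ 2 = L := sub_eq_zero.mp (h.haus _ this)
    rwa [IsIdempotentElem, ← sq]
  refine ⟨L, hidem, ?_⟩
  have h1 : π ∣ L - f 1 := by simpa using hL 1
  have h2 : π ∣ f 1 - f 0 := by simpa using key2 0
  have : L - x = (L - f 1) + (f 1 - f 0) := by simp [hf]
  rw [this]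
  exact dvd_add h1 h2

/-- Geometric series: `1 - π * a` is a unit. -/
theorem isUnit_one_sub (h : PAdicData π) (a : A) : IsUnit (1 - π * a) := by
  set x := π * a with hxa
  set f : ℕ → A := fun n => ∑ k ∈ Finset.range n, x ^ k with hf
  have compat : ∀ m n, m ≤ n → π ^ m ∣ f n - f m := by
    intro m n hmn
    induction n, hmn using Nat.le_induction with
    | base => simp
    | succ n hmn ih =>
      have : f (n + 1) - f m = x ^ n + (f n - f m) := by
        simp [hf, Finset.sum_range_succ]; ring
      rw [this]
      refine dvd_add ?_ ih
      have : π ^ n ∣ x ^ n := pow_dvd_pow_of_dvd ⟨a, rfl⟩ n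
      exact dvd_trans (pow_dvd_pow π hmn) this
  obtain ⟨L, hL⟩ := h.compl f compat
  have key : ∀ n, π ^ n ∣ (1 - x) * L - 1 := by
    intro n
    have hgeo : (1 - x) * f n = 1 - x ^ n := by
      have := geom_sum_mul x n
      have h2 : (1 - x) * f n = -((f n) * (x - 1)) := by ring
      rw [h2, this]; ring
    have : (1 - x) * L - 1 = (1 - x) * (L - f n) - x ^ n := by
      rw [mul_sub, hgeo]; ring
    rw [this]
    refine dvd_sub ((hL n).mul_left _) (pow_dvd_pow_of_dvd ⟨a, rfl⟩ n)
  exact IsUnit.of_mul_eq_one L (sub_eq_zero.mp (h.haus _ key))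

/-- `PAdicData` transfers along ring isomorphisms. -/
theorem map (Φ : A ≃+* B) (h : PAdicData π) : PAdicData (Φ π) where
  haus x hx := by
    have : Φ.symm x = 0 := by
      refine h.haus _ fun n => ?_
      have := map_dvd Φ.symm (hx n)
      simpa using this
    have := congrArg Φ this
    simpa using this
  compl f hc := by
    obtain ⟨L, hL⟩ := h.compl (fun n => Φ.symm (f n)) (by
      intro m n hmn
      have := map_dvd Φ.symm (hc m n hmn)
      simpa using this)
    refine ⟨Φ L, fun n => ?_⟩
    have := map_dvd Φ (hL n)
    simpa using this

/-- `PAdicData` for a product descends to each component. -/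
theorem of_pi {ι : Type*} [DecidableEq ι] {R : ι → Type*} [∀ i, CommRing (R i)]
    {π : ∀ i, R i} (h : PAdicData π) (i : ι) : PAdicData (π i) where
  haus x hx := by
    have : Pi.single i x = (0 : ∀ j, R j) := by
      refine h.haus _ fun n => ?_
      obtain ⟨y, hy⟩ := hx n
      refine ⟨Pi.single i y, funext fun j => ?_⟩
      by_cases hj : j = i
      · subst hj; simp [hy]
      · simp [Pi.single_eq_of_ne hj]
    have := congrFun this i
    simpa using this
  compl f hc := by
    obtain ⟨L, hL⟩ := h.compl (fun n => Pi.single i (f n)) (by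
      intro m n hmn
      obtain ⟨y, hy⟩ := hc m n hmn
      refine ⟨Pi.single i y, funext fun j => ?_⟩
      by_cases hj : j = i
      · subst hj; simp [hy]
      · simp [Pi.single_eq_of_ne hj])
    refine ⟨L i, fun n => ?_⟩
    obtain ⟨y, hy⟩ := hL n
    refine ⟨y i, ?_⟩
    have := congrFun hy i
    simpa using this

end PAdicData

/-! ### `ℤ_p` is `p`-adically complete -/

theorem padicInt_pAdicData (p : ℕ) [Fact p.Prime] : PAdicData ((p : ℤ_[p])) where
  haus x hx := by
    refine IsHausdorff.haus (I := IsLocalRing.maximalIdeal ℤ_[p])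
      (inferInstance : IsAdicComplete (IsLocalRing.maximalIdeal ℤ_[p]) ℤ_[p]).toIsHausdorff
      x fun n => ?_
    simp only [← Ideal.one_eq_top, smul_eq_mul, mul_one, SModEq.sub_mem,
      PadicInt.maximalIdeal_eq_span_p, Ideal.span_singleton_pow, Ideal.mem_span_singleton,
      sub_zero]
    exact hx n
  compl f hf := by
    obtain ⟨L, hL⟩ := IsPrecomplete.prec (I := IsLocalRing.maximalIdeal ℤ_[p])
      (inferInstance : IsAdicComplete (IsLocalRing.maximalIdeal ℤ_[p]) ℤ_[p]).toIsPrecomplete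
      (f := f) (by
        intro m n hmn
        simp only [← Ideal.one_eq_top, smul_eq_mul, mul_one, SModEq.sub_mem,
          PadicInt.maximalIdeal_eq_span_p, Ideal.span_singleton_pow, Ideal.mem_span_singleton]
        exact dvd_sub_comm.mp (hf m n hmn))
    refine ⟨L, fun n => ?_⟩
    have := hL n
    simp only [← Ideal.one_eq_top, smul_eq_mul, mul_one, SModEq.sub_mem,
      PadicInt.maximalIdeal_eq_span_p, Ideal.span_singleton_pow,
      Ideal.mem_span_singleton] at this
    exact dvd_sub_comm.mp this

/-! ### Coefficientwise divisibility in `MonoidAlgebra ℤ_[p] G` -/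

section MA

variable {p : ℕ} [Fact p.Prime] {G : Type} [CommGroup G] [Fintype G]

theorem MA_single_one_dvd_iff (r : ℤ_[p]) (x : MonoidAlgebra ℤ_[p] G) :
    (MonoidAlgebra.single (1 : G) r) ∣ x ↔ ∀ g : G, r ∣ x.coeff g := by
  constructor
  · rintro ⟨y, rfl⟩ g
    exact ⟨y.coeff g, MonoidAlgebra.coeff_single_one_mul y r g⟩
  · intro hco
    classical
    refine ⟨MonoidAlgebra.ofCoeff (Finsupp.equivFunOnFinite.symm fun g => Classical.choose (hco g) :
      G →₀ ℤ_[p]), MonoidAlgebra.ext (Finsupp.ext fun g => ?_)⟩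
    rw [MonoidAlgebra.coeff_single_one_mul, MonoidAlgebra.coeff_ofCoeff (Finsupp.equivFunOnFinite.symm _)]
    have hy : (Finsupp.equivFunOnFinite.symm fun g => Classical.choose (hco g) : G →₀ ℤ_[p]) g
        = Classical.choose (hco g) := by
      simp [Finsupp.equivFunOnFinite]
    rw [hy, ← Classical.choose_spec (hco g)]

theorem MA_natCast_pow_eq (n k : ℕ) :
    ((n : MonoidAlgebra ℤ_[p] G)) ^ k = MonoidAlgebra.single (1 : G) ((n : ℤ_[p]) ^ k) := by
  rw [MonoidAlgebra.natCast_def, MonoidAlgebra.single_pow, one_pow]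

theorem MA_sub_apply (x y : MonoidAlgebra ℤ_[p] G) (g : G) :
    (x - y).coeff g = x.coeff g - y.coeff g :=
  Finsupp.sub_apply x.coeff y.coeff g

theorem MA_pAdicData (p : ℕ) [Fact p.Prime] (G : Type) [CommGroup G] [Fintype G] :
    PAdicData ((p : MonoidAlgebra ℤ_[p] G)) where
  haus x hx := by
    refine MonoidAlgebra.ext (Finsupp.ext fun g => ?_)
    refine (padicInt_pAdicData p).haus (x.coeff g) fun n => ?_
    have := (MA_single_one_dvd_iff ((p : ℤ_[p]) ^ n) x).mp (by rw [← MA_natCast_pow_eq]; exact hx n)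
    exact this g
  compl f hf := by
    have hg : ∀ g : G, ∃ Lg : ℤ_[p], ∀ n : ℕ, (p : ℤ_[p]) ^ n ∣ Lg - (f n).coeff g := by
      intro g
      refine (padicInt_pAdicData p).compl (fun n => (f n).coeff g) fun m n hmn => ?_
      have := (MA_single_one_dvd_iff ((p : ℤ_[p]) ^ m) (f n - f m)).mp
        (by rw [← MA_natCast_pow_eq]; exact hf m n hmn) g
      rwa [MA_sub_apply] at this
    choose Lfun hLfun using hg
    refine ⟨MonoidAlgebra.ofCoeff (Finsupp.equivFunOnFinite.symm Lfun : G →₀ ℤ_[p]), fun n => ?_⟩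
    rw [MA_natCast_pow_eq]
    refine (MA_single_one_dvd_iff _ _).mpr fun g => ?_
    rw [MA_sub_apply]
    have : (MonoidAlgebra.ofCoeff (Finsupp.equivFunOnFinite.symm Lfun : G →₀ ℤ_[p])).coeff g
        = Lfun g := by
      rfl
    rw [this]
    exact hLfun g n

theorem MA_p_regular (p : ℕ) [Fact p.Prime] (G : Type) [CommGroup G] [Fintype G]
    (x : MonoidAlgebra ℤ_[p] G) (hx : (p : MonoidAlgebra ℤ_[p] G) * x = 0) : x = 0 := by
  refine MonoidAlgebra.ext (Finsupp.ext fun g => ?_)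
  have : ((p : MonoidAlgebra ℤ_[p] G) * x).coeff g = (p : ℤ_[p]) * x.coeff g := by
    rw [MonoidAlgebra.natCast_def, MonoidAlgebra.coeff_single_one_mul]
  rw [hx] at this
  have hp0 : (p : ℤ_[p]) ≠ 0 := PadicInt.prime_p.ne_zero
  have := this.symm
  simpa [hp0] using this

end MA

/-! ### Reduction mod `p` of the group algebra -/

section Rho

variable (p : ℕ) [Fact p.Prime] (G : Type) [CommGroup G] [Fintype G]

/-- Coefficientwise reduction `ℤ_p[G] → 𝔽_p[G]`. -/
noncomputable def rho : MonoidAlgebra ℤ_[p] G →+* MonoidAlgebra (ZMod p) G :=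
  MonoidAlgebra.liftNCRingHom
    (MonoidAlgebra.singleOneRingHom.comp (PadicInt.toZMod (p := p)))
    (MonoidAlgebra.of (ZMod p) G) (fun _ _ => Commute.all _ _)

theorem rho_single (a : G) (b : ℤ_[p]) :
    rho p G (MonoidAlgebra.single a b) = MonoidAlgebra.single a (PadicInt.toZMod b) := by
  unfold rho
  show MonoidAlgebra.liftNC _ _ (MonoidAlgebra.single a b) = _
  rw [MonoidAlgebra.liftNC_single]
  show MonoidAlgebra.single (1 : G) (PadicInt.toZMod b) * MonoidAlgebra.single a (1 : ZMod p) = _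
  rw [MonoidAlgebra.single_mul_single, one_mul, mul_one]

theorem rho_apply (x : MonoidAlgebra ℤ_[p] G) (g : G) :
    (rho p G x).coeff g = PadicInt.toZMod (x.coeff g) := by
  classical
  have key : ((Finsupp.applyAddHom g).comp (MonoidAlgebra.coeffAddEquiv.toAddMonoidHom.comp
        ((rho p G).toAddMonoidHom.comp MonoidAlgebra.coeffAddEquiv.symm.toAddMonoidHom)) :
        (G →₀ ℤ_[p]) →+ ZMod p)
      = ((PadicInt.toZMod (p := p)).toAddMonoidHom.comp (Finsupp.applyAddHom g)) := by
    refine Finsupp.addHom_ext fun a b => ?_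
    show (rho p G (MonoidAlgebra.single a b)).coeff g
        = PadicInt.toZMod ((Finsupp.single a b) g)
    rw [rho_single]
    rcases eq_or_ne a g with rfl | hag
    · show (Finsupp.single a (PadicInt.toZMod b)) a = _
      simp
    · show (Finsupp.single a (PadicInt.toZMod b)) g = _
      rw [Finsupp.single_eq_of_ne' hag, Finsupp.single_eq_of_ne' hag, map_zero]
  exact DFunLike.congr_fun key x.coeff

theorem rho_surjective : Function.Surjective (rho p G) := by
  intro y
  classical
  refine ⟨MonoidAlgebra.ofCoeff
      (Finsupp.equivFunOnFinite.symm fun g => ((y.coeff g).val : ℤ_[p]) : G →₀ ℤ_[p]),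
    MonoidAlgebra.ext (Finsupp.ext fun g => ?_)⟩
  rw [rho_apply]
  have h1 : (MonoidAlgebra.ofCoeff (Finsupp.equivFunOnFinite.symm
      (fun g => ((y.coeff g).val : ℤ_[p])) : G →₀ ℤ_[p])).coeff g
      = ((y.coeff g).val : ℤ_[p]) := by
    simp [Finsupp.equivFunOnFinite, MonoidAlgebra.coeff_ofCoeff]
  rw [h1, map_natCast]
  exact ZMod.natCast_rightInverse (y.coeff g)

theorem rho_ker : RingHom.ker (rho p G) = Ideal.span {(p : MonoidAlgebra ℤ_[p] G)} := by
  ext x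
  rw [RingHom.mem_ker, Ideal.mem_span_singleton]
  constructor
  · intro hx
    have : ∀ g : G, (p : ℤ_[p]) ∣ x.coeff g := by
      intro g
      have : (rho p G x).coeff g = 0 := by rw [hx]; rfl
      rw [rho_apply] at this
      have hmem : x.coeff g ∈ RingHom.ker (PadicInt.toZMod (p := p)) := this
      rwa [PadicInt.ker_toZMod, PadicInt.maximalIdeal_eq_span_p,
        Ideal.mem_span_singleton] at hmem
    have := (MA_single_one_dvd_iff ((p : ℤ_[p])) x).mpr this
    rwa [← pow_one ((p : ℤ_[p])), ← MA_natCast_pow_eq, pow_one] at this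
  · rintro ⟨y, rfl⟩
    rw [map_mul]
    have : rho p G ((p : MonoidAlgebra ℤ_[p] G)) = 0 := by
      rw [map_natCast]
      refine MonoidAlgebra.ext (Finsupp.ext fun g => ?_)
      rw [MonoidAlgebra.natCast_def]
      show (Finsupp.single (1 : G) ((p : ZMod p))) g = (0 : MonoidAlgebra (ZMod p) G).coeff g
      simp [ZMod.natCast_self]
    rw [this, zero_mul]

end Rho

/-! ### Commutative semisimple rings are reduced -/

theorem isReduced_of_isSemisimpleRing (R : Type*) [CommRing R] [IsSemisimpleRing R] :
    IsReduced R := by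
  refine ⟨fun x hx => ?_⟩
  obtain ⟨e, he, hspan⟩ := IsSemisimpleRing.ideal_eq_span_idempotent (Ideal.span {x})
  obtain ⟨n, hn⟩ := hx
  have hex : e ∈ Ideal.span {x} := by
    rw [hspan]; exact Ideal.mem_span_singleton_self e
  rw [Ideal.mem_span_singleton] at hex
  obtain ⟨c, hc⟩ := hex
  have he0 : e = 0 := by
    have h1 : e ^ (n + 1) = e := he.pow_succ_eq n
    have h2 : e ^ (n + 1) = x ^ (n + 1) * c ^ (n + 1) := by rw [hc, mul_pow]
    have h3 : x ^ (n + 1) = 0 := by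
      rw [pow_succ, hn, zero_mul]
    rw [h2, h3, zero_mul] at h1
    exact h1.symm
  have : x ∈ Ideal.span {x} := Ideal.mem_span_singleton_self x
  rw [hspan, he0] at this
  rcases Ideal.mem_span_singleton.mp this with ⟨d, hd⟩
  simpa using hd

/-! ### Lifting complete orthogonal idempotents -/

theorem lift_coi {A B : Type*} [CommRing A] [CommRing B] {π : A}
    (h : PAdicData π) (ρ : A →+* B) (hsurj : Function.Surjective ρ)
    (hker : RingHom.ker ρ = Ideal.span {π})
    {ι : Type*} [Fintype ι] (f : ι → B) (hf : CompleteOrthogonalIdempotents f) :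
    ∃ e : ι → A, CompleteOrthogonalIdempotents e ∧ ∀ i, ρ (e i) = f i := by
  have hmem : ∀ z : A, ρ z = 0 → π ∣ z := by
    intro z hz
    have : z ∈ RingHom.ker ρ := hz
    rwa [hker, Ideal.mem_span_singleton] at this
  have hlift : ∀ i, ∃ e : A, IsIdempotentElem e ∧ ρ e = f i := by
    intro i
    obtain ⟨x, hx⟩ := hsurj (f i)
    obtain ⟨e, he, hd⟩ := h.lift_idem x (by
      refine hmem _ ?_
      rw [map_sub, map_pow, hx, sq, hf.idem i, sub_self])
    refine ⟨e, he, ?_⟩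
    obtain ⟨c, hc⟩ := hd
    have : ρ (e - x) = 0 := by
      rw [hc, map_mul]
      have : ρ π = 0 := by
        have : π ∈ RingHom.ker ρ := by rw [hker]; exact Ideal.mem_span_singleton_self π
        exact this
      rw [this, zero_mul]
    rw [map_sub, sub_eq_zero] at this
    rw [this, hx]
  choose e hidem hre using hlift
  have hortho : ∀ i j, i ≠ j → e i * e j = 0 := by
    intro i j hij
    refine h.eq_zero_of_idem_dvd ?_ ?_
    · show (e i * e j) * (e i * e j) = e i * e j
      calc (e i * e j) * (e i * e j) = (e i * e i) * (e j * e j) := by ring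
      _ = e i * e j := by rw [hidem i, hidem j]
    · refine hmem _ ?_
      rw [map_mul, hre, hre, hf.ortho hij]
  have hsum : ∑ i, e i = 1 := by
    have hs : (∑ i, e i) * (∑ i, e i) = ∑ i, e i := by
      classical
      rw [Finset.sum_mul_sum]
      rw [Finset.sum_congr rfl (fun i _ => Finset.sum_eq_single i
        (fun j _ hj => hortho i j (fun hij => hj (hij ▸ rfl)))
        (fun hi => absurd (Finset.mem_univ i) hi))]
      exact Finset.sum_congr rfl fun i _ => hidem i
    have hv : IsIdempotentElem (1 - ∑ i, e i) := by
      show (1 - ∑ i, e i) * (1 - ∑ i, e i) = 1 - ∑ i, e i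
      have := hs
      ring_nf
      ring_nf at this
      linear_combination this
    have hd : π ∣ 1 - ∑ i, e i := by
      refine hmem _ ?_
      rw [map_sub, map_one, map_sum]
      have : ∀ i, ρ (e i) = f i := hre
      simp only [this]
      rw [hf.complete, sub_self]
    have h0 := h.eq_zero_of_idem_dvd hv hd
    linear_combination -h0
  refine ⟨e, ⟨⟨hidem, hortho⟩, hsum⟩, hre⟩

/-! ### Packaging a factor as an unramified complete DVR -/

noncomputable def mkUnramified (p : ℕ) [Fact p.Prime] (R : Type) [CommRing R]
    (h : PAdicData ((p : R))) (hreg : ∀ x : R, (p : R) * x = 0 → x = 0)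
    (F : Type) [Field F] [Finite F] (φ : (R ⧸ Ideal.span {(p : R)}) ≃+* F) :
    UnramifiedCompleteDVR p := by
  have hfield : IsField (R ⧸ Ideal.span {(p : R)}) :=
    MulEquiv.isField (Field.toIsField F) φ.toMulEquiv
  have hmax : (Ideal.span {(p : R)}).IsMaximal := Ideal.Quotient.maximal_of_isField _ hfield
  have hnt : Nontrivial R := by
    refine ⟨1, 0, fun h10 => hmax.ne_top ?_⟩
    rw [Ideal.eq_top_iff_one, h10]
    exact zero_mem _
  have hunit : ∀ x : R, x ∉ Ideal.span {(p : R)} → IsUnit x := by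
    intro x hx
    obtain ⟨y, i, hi, hyx⟩ := hmax.exists_inv hx
    obtain ⟨c, rfl⟩ := Ideal.mem_span_singleton.mp hi
    have : y * x = 1 - (p : R) * c := by linear_combination hyx
    exact isUnit_of_mul_isUnit_right (this ▸ h.isUnit_one_sub c)
  have hlocal : IsLocalRing R := by
    refine IsLocalRing.of_isUnit_or_isUnit_one_sub_self fun a => ?_
    by_cases ha : a ∈ Ideal.span {(p : R)}
    · refine Or.inr (hunit _ fun hmem => hmax.ne_top ?_)
      rw [Ideal.eq_top_iff_one]
      have := add_mem hmem ha
      simpa using this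
    · exact Or.inl (hunit _ ha)
  have p_gen_eq : IsLocalRing.maximalIdeal R = Ideal.span {(p : R)} :=
    (IsLocalRing.eq_maximalIdeal hmax).symm
  have hpow_ne : ∀ k : ℕ, (p : R) ^ k ≠ 0 := by
    intro k
    induction k with
    | zero => simpa using one_ne_zero
    | succ k ih =>
      intro hc
      rw [pow_succ, mul_comm] at hc
      exact ih (hreg _ hc)
  have hfactor : ∀ x : R, x ≠ 0 → ∃ (n : ℕ) (u : R), IsUnit u ∧ x = (p : R) ^ n * u := by
    intro x hx
    classical
    have hex : ∃ n : ℕ, ¬ (p : R) ^ n ∣ x := by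
      by_contra hcon
      push_neg at hcon
      exact hx (h.haus x hcon)
    have hN := Nat.find_spec hex
    have hN0 : Nat.find hex ≠ 0 := fun h0 => hN (by rw [h0, pow_zero]; exact one_dvd x)
    obtain ⟨m, hm⟩ : ∃ m, Nat.find hex = m + 1 := ⟨Nat.find hex - 1, by omega⟩
    have hdvd : (p : R) ^ m ∣ x := not_not.mp (Nat.find_min hex (by omega))
    obtain ⟨y, hy⟩ := hdvd
    refine ⟨m, y, hunit y fun hmem => ?_, hy⟩
    obtain ⟨c, rfl⟩ := Ideal.mem_span_singleton.mp hmem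
    refine hN ?_
    rw [hm, hy, pow_succ]
    exact ⟨c, by ring⟩
  have hnzd : NoZeroDivisors R := by
    refine ⟨fun {a b} hab => ?_⟩
    by_contra hcon
    push_neg at hcon
    obtain ⟨ha, hb⟩ := hcon
    obtain ⟨n, u, hu, hue⟩ := hfactor a ha
    obtain ⟨k, v, hv, hve⟩ := hfactor b hb
    have h2 : (p : R) ^ (n + k) * (u * v) = 0 := by
      rw [pow_add]
      calc (p : R) ^ n * (p : R) ^ k * (u * v) = a * b := by rw [hue, hve]; ring
      _ = 0 := hab
    obtain ⟨z, hz⟩ := (hu.mul hv).exists_right_inv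
    have : (p : R) ^ (n + k) = 0 := by
      calc (p : R) ^ (n + k) = (p : R) ^ (n + k) * ((u * v) * z) := by rw [hz, mul_one]
      _ = ((p : R) ^ (n + k) * (u * v)) * z := by ring
      _ = 0 := by rw [h2, zero_mul]
    exact hpow_ne _ this
  have hdom : IsDomain R := NoZeroDivisors.to_isDomain R
  have hp_not_unit : ¬ IsUnit ((p : R)) := fun hu =>
    hmax.ne_top (Ideal.span_singleton_eq_top.mpr hu)
  have hp_ne : (p : R) ≠ 0 := by
    have := hpow_ne 1
    simpa using this
  have hirr : Irreducible ((p : R)) := by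
    refine ⟨hp_not_unit, fun a b hab => ?_⟩
    have ha : a ≠ 0 := fun h0 => hp_ne (by rw [hab, h0, zero_mul])
    have hb : b ≠ 0 := fun h0 => hp_ne (by rw [hab, h0, mul_zero])
    obtain ⟨n, u, hu, hue⟩ := hfactor a ha
    obtain ⟨k, v, hv, hve⟩ := hfactor b hb
    rcases Nat.eq_zero_or_pos n with hn0 | hn1
    · left; rw [hue, hn0, pow_zero, one_mul]; exact hu
    rcases Nat.eq_zero_or_pos k with hk0 | hk1
    · right; rw [hve, hk0, pow_zero, one_mul]; exact hv
    exfalso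
    obtain ⟨n', rfl⟩ : ∃ n', n = n' + 1 := ⟨n - 1, by omega⟩
    obtain ⟨k', rfl⟩ : ∃ k', k = k' + 1 := ⟨k - 1, by omega⟩
    have hz : (p : R) * (1 - (p : R) ^ (n' + k' + 1) * (u * v)) = 0 := by
      have : (p : R) = ((p : R) ^ (n' + 1) * u) * ((p : R) ^ (k' + 1) * v) := by
        rw [← hue, ← hve]; exact hab
      linear_combination this
    have h1 : (1 : R) - (p : R) ^ (n' + k' + 1) * (u * v) = 0 := hreg _ hz
    refine hp_not_unit (IsUnit.of_mul_eq_one ((p : R) ^ (n' + k') * (u * v)) ?_)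
    linear_combination -h1
  have hdvr : IsDiscreteValuationRing R := by
    refine IsDiscreteValuationRing.ofHasUnitMulPowIrreducibleFactorization
      ⟨(p : R), hirr, fun {x} hx => ?_⟩
    obtain ⟨n, u, hu, hue⟩ := hfactor x hx
    exact ⟨n, hu.unit, by rw [IsUnit.unit_spec]; exact hue.symm⟩
  have hH : IsHausdorff (Ideal.span {(p : R)}) R := by
    refine ⟨fun x hx => h.haus x fun n => ?_⟩
    have := hx n
    simpa only [← Ideal.one_eq_top, smul_eq_mul, mul_one, SModEq.sub_mem,
      Ideal.span_singleton_pow, Ideal.mem_span_singleton, sub_zero] using this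
  have hP : IsPrecomplete (Ideal.span {(p : R)}) R := by
    refine ⟨fun {f} hf => ?_⟩
    obtain ⟨L, hL⟩ := h.compl f (by
      intro m n hmn
      have := hf hmn
      simp only [← Ideal.one_eq_top, smul_eq_mul, mul_one, SModEq.sub_mem,
        Ideal.span_singleton_pow, Ideal.mem_span_singleton] at this
      exact dvd_sub_comm.mp this)
    refine ⟨L, fun n => ?_⟩
    simp only [← Ideal.one_eq_top, smul_eq_mul, mul_one, SModEq.sub_mem,
      Ideal.span_singleton_pow, Ideal.mem_span_singleton]
    exact dvd_sub_comm.mp (hL n)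
  have hcomplete : IsAdicComplete (IsLocalRing.maximalIdeal R) R := by
    rw [p_gen_eq]
    exact { toIsHausdorff := hH, toIsPrecomplete := hP }
  have hresEquiv : (R ⧸ IsLocalRing.maximalIdeal R) ≃+* F :=
    (Ideal.quotEquivOfEq p_gen_eq).trans φ
  have hfinRes : Finite (IsLocalRing.ResidueField R) :=
    Finite.of_equiv F (hresEquiv.symm.toEquiv)
  have hcharRes : CharP (IsLocalRing.ResidueField R) p := by
    have hp0 : ((p : ℕ) : IsLocalRing.ResidueField R) = 0 := by
      have : ((p : ℕ) : IsLocalRing.ResidueField R) = IsLocalRing.residue R ((p : ℕ) : R) :=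
        (map_natCast (IsLocalRing.residue R) p).symm
      rw [this]
      show Ideal.Quotient.mk (IsLocalRing.maximalIdeal R) ((p : ℕ) : R) = 0
      rw [Ideal.Quotient.eq_zero_iff_mem, p_gen_eq]
      exact Ideal.mem_span_singleton_self _
    have hdvd : ringChar (IsLocalRing.ResidueField R) ∣ p :=
      (ringChar.spec _ p).mp hp0
    rcases (Fact.out : p.Prime).eq_one_or_self_of_dvd _ hdvd with h1 | hp
    · exfalso
      have : ((1 : ℕ) : IsLocalRing.ResidueField R) = 0 :=
        (ringChar.spec _ 1).mpr (h1 ▸ dvd_refl _)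
      simpa using this
    · exact ringChar.of_eq hp
  exact { carrier := R, isDomain := hdom, dvr := hdvr, complete := hcomplete,
          p_gen := p_gen_eq, finiteResidue := hfinRes, charResidue := hcharRes }


/-- Kernel of evaluation on a product ring. -/
theorem ker_evalRingHom {ι : Type} [DecidableEq ι] (R : ι → Type*) [∀ i, CommRing (R i)]
    (i : ι) : RingHom.ker (Pi.evalRingHom R i) = Ideal.span {1 - Pi.single i 1} := by
  ext x
  rw [RingHom.mem_ker, Ideal.mem_span_singleton]
  constructor
  · intro hx
    have hx' : x i = 0 := hx
    refine ⟨x, funext fun j => ?_⟩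
    rcases eq_or_ne j i with rfl | hj
    · simp [Pi.single_eq_same, hx']
    · simp [Pi.single_eq_of_ne hj]
  · rintro ⟨c, rfl⟩
    simp [Pi.single_eq_same]

set_option maxHeartbeats 1000000 in
set_option synthInstance.maxHeartbeats 100000 in
theorem stmt5 (p : ℕ) [Fact p.Prime] (G : Type) [CommGroup G] [Fintype G]
    (hG : ¬ p ∣ Fintype.card G) :
    ∃ (ι : Type) (_ : Fintype ι) (R : ι → UnramifiedCompleteDVR p),
      Nonempty (MonoidAlgebra ℤ_[p] G ≃+* ∀ i, (R i).carrier) := by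
  classical
  have hA : PAdicData ((p : MonoidAlgebra ℤ_[p] G)) := MA_pAdicData p G
  haveI : NeZero ((Fintype.card G : ZMod p)) := ⟨by
    rw [Ne, ZMod.natCast_eq_zero_iff]; exact hG⟩
  haveI hBfin : Finite (MonoidAlgebra (ZMod p) G) :=
    Finite.of_equiv _ (MonoidAlgebra.coeffEquiv.trans (Finsupp.equivFunOnFinite (α := G) (M := ZMod p))).symm
  haveI : IsSemisimpleRing (MonoidAlgebra (ZMod p) G) := by
    haveI : NeZero ((Nat.card G : ZMod p)) := by rwa [Nat.card_eq_fintype_card]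
    exact inferInstance
  haveI : IsReduced (MonoidAlgebra (ZMod p) G) :=
    isReduced_of_isSemisimpleRing (MonoidAlgebra (ZMod p) G)
  haveI : Finite {I : Ideal (MonoidAlgebra (ZMod p) G) | I.IsMaximal} :=
    (IsArtinianRing.setOfPred_isMaximal_finite (MonoidAlgebra (ZMod p) G)).to_subtype
  let ι : Type := {I : Ideal (MonoidAlgebra (ZMod p) G) | I.IsMaximal}
  haveI : Fintype ι := Fintype.ofFinite _
  letI instField : ∀ I : ι, Field (MonoidAlgebra (ZMod p) G ⧸ I.1) := fun I =>
    haveI : I.1.IsMaximal := I.2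
    Ideal.Quotient.field I.1
  let ε : MonoidAlgebra (ZMod p) G ≃+* ∀ I : ι, MonoidAlgebra (ZMod p) G ⧸ I.1 :=
    (IsArtinianRing.equivPi (MonoidAlgebra (ZMod p) G)).toRingEquiv.trans
      (RingEquiv.piCongrLeft (fun I : ι => MonoidAlgebra (ZMod p) G ⧸ I.1)
        ({ toFun := fun I => ⟨I.asIdeal, I.2⟩, invFun := fun I => ⟨I.1, I.2⟩,
           left_inv := fun _ => rfl, right_inv := fun _ => rfl } :
            MaximalSpectrum (MonoidAlgebra (ZMod p) G) ≃ ι))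
  let f : ι → MonoidAlgebra (ZMod p) G := fun i => ε.symm (Pi.single i 1)
  have hf : CompleteOrthogonalIdempotents f := by
    have h1 := CompleteOrthogonalIdempotents.single
      (fun I : ι => MonoidAlgebra (ZMod p) G ⧸ I.1)
    exact h1.map ε.symm.toRingHom
  obtain ⟨e, hco, hre⟩ := lift_coi hA (rho p G) (rho_surjective p G) (rho_ker p G) f hf
  let Φ : MonoidAlgebra ℤ_[p] G ≃+*
      ∀ i : ι, (MonoidAlgebra ℤ_[p] G ⧸ Ideal.span {1 - e i}) :=
    RingEquiv.ofBijective _ hco.bijective_pi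
  -- transfer completeness and regularity to the factors
  have hPi : PAdicData ((p : ∀ i : ι, MonoidAlgebra ℤ_[p] G ⧸ Ideal.span {1 - e i})) := by
    have := hA.map Φ
    rwa [map_natCast] at this
  have hPAD : ∀ i : ι, PAdicData ((p : MonoidAlgebra ℤ_[p] G ⧸ Ideal.span {1 - e i})) := by
    intro i
    have := hPi.of_pi i
    rwa [Pi.natCast_apply] at this
  have hreg : ∀ i : ι, ∀ x : MonoidAlgebra ℤ_[p] G ⧸ Ideal.span {1 - e i},
      (p : MonoidAlgebra ℤ_[p] G ⧸ Ideal.span {1 - e i}) * x = 0 → x = 0 := by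
    intro i x hx
    have hsingle : (p : ∀ j : ι, MonoidAlgebra ℤ_[p] G ⧸ Ideal.span {1 - e j})
        * Pi.single i x = 0 := by
      funext j
      rcases eq_or_ne j i with rfl | hj
      · rw [Pi.mul_apply, Pi.natCast_apply, Pi.single_eq_same, Pi.zero_apply]
        exact hx
      · rw [Pi.mul_apply, Pi.single_eq_of_ne hj, mul_zero, Pi.zero_apply]
    have hy : (p : MonoidAlgebra ℤ_[p] G) * Φ.symm (Pi.single i x) = 0 := by
      apply Φ.injective
      rw [map_mul, map_natCast, Φ.apply_symm_apply, map_zero]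
      exact hsingle
    have h0 := MA_p_regular p G _ hy
    have h1 : Pi.single i x = (0 : ∀ j : ι, MonoidAlgebra ℤ_[p] G ⧸ Ideal.span {1 - e j}) := by
      have := congrArg Φ h0
      rwa [Φ.apply_symm_apply, map_zero] at this
    have := congrFun h1 i
    simpa using this
  -- residue field isomorphisms
  have hφ : ∀ i : ι, ((MonoidAlgebra ℤ_[p] G ⧸ Ideal.span {1 - e i}) ⧸
      Ideal.span {(p : MonoidAlgebra ℤ_[p] G ⧸ Ideal.span {1 - e i})})
      ≃+* (MonoidAlgebra (ZMod p) G ⧸ (i : Ideal (MonoidAlgebra (ZMod p) G))) := by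
    intro i
    have hJmap : Ideal.span {(p : MonoidAlgebra ℤ_[p] G ⧸ Ideal.span {1 - e i})}
        = Ideal.map (Ideal.Quotient.mk (Ideal.span {1 - e i}))
          (Ideal.span {(p : MonoidAlgebra ℤ_[p] G)}) := by
      rw [Ideal.map_span, Set.image_singleton, map_natCast]
    let ψ1 := (Ideal.quotEquivOfEq hJmap).trans
      (DoubleQuot.quotQuotEquivQuotSup (Ideal.span {1 - e i})
        (Ideal.span {(p : MonoidAlgebra ℤ_[p] G)}))
    have hmap1 : Ideal.map (rho p G) (Ideal.span {1 - e i}) = Ideal.span {1 - f i} := by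
      rw [Ideal.map_span, Set.image_singleton, map_sub, map_one, hre i]
    have hker2 : RingHom.ker ((Ideal.Quotient.mk (Ideal.span {1 - f i})).comp (rho p G))
        = Ideal.span {1 - e i} ⊔ Ideal.span {(p : MonoidAlgebra ℤ_[p] G)} := by
      rw [← RingHom.comap_ker, Ideal.mk_ker, ← hmap1,
        Ideal.comap_map_of_surjective _ (rho_surjective p G), ← RingHom.ker_eq_comap_bot,
        rho_ker]
    have hsurj2 : Function.Surjective
        ((Ideal.Quotient.mk (Ideal.span {1 - f i})).comp (rho p G)) :=
      Ideal.Quotient.mk_surjective.comp (rho_surjective p G)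
    let ψ2 := (Ideal.quotEquivOfEq hker2.symm).trans
      (RingHom.quotientKerEquivOfSurjective hsurj2)
    have hmap3 : Ideal.span {(1 : ∀ I : ι, MonoidAlgebra (ZMod p) G ⧸ I.1) - Pi.single i 1}
        = Ideal.map (ε : MonoidAlgebra (ZMod p) G →+* _) (Ideal.span {1 - f i}) := by
      have hfi : (ε : MonoidAlgebra (ZMod p) G →+* ∀ I : ι, MonoidAlgebra (ZMod p) G ⧸ I.1)
          (f i) = Pi.single i 1 := ε.apply_symm_apply _
      rw [Ideal.map_span, Set.image_singleton, map_sub, map_one, hfi]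
    let ψ3 := Ideal.quotientEquiv (Ideal.span {1 - f i})
      (Ideal.span {(1 : ∀ I : ι, MonoidAlgebra (ZMod p) G ⧸ I.1) - Pi.single i 1}) ε hmap3
    have hker4 := ker_evalRingHom (fun I : ι => MonoidAlgebra (ZMod p) G ⧸ I.1) i
    have hsurj4 : Function.Surjective
        (Pi.evalRingHom (fun I : ι => MonoidAlgebra (ZMod p) G ⧸ I.1) i) := fun b =>
      ⟨Pi.single i b, by simp⟩
    let ψ4 := (Ideal.quotEquivOfEq hker4.symm).trans
      (RingHom.quotientKerEquivOfSurjective hsurj4)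
    exact ψ1.trans (ψ2.trans (ψ3.trans ψ4))
  haveI hFinQuot : ∀ i : ι, Finite (MonoidAlgebra (ZMod p) G ⧸ (i : Ideal _)) := fun i =>
    Finite.of_surjective _ Ideal.Quotient.mk_surjective
  let Rfam : ι → UnramifiedCompleteDVR p := fun i =>
    mkUnramified p (MonoidAlgebra ℤ_[p] G ⧸ Ideal.span {1 - e i}) (hPAD i) (hreg i)
      (MonoidAlgebra (ZMod p) G ⧸ (i : Ideal (MonoidAlgebra (ZMod p) G))) (hφ i)
  refine ⟨ι, inferInstance, Rfam, ⟨?_⟩⟩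
  exact Φ
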